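/- arXiv:2306.07870 — 4 statements merged into one kernel-verified Lean document; each statement's English description precedes it below -/
import Mathlib

section
/- Let p be a binary word of length l. For any n ≥ 0, B_{n,p}(0) = Σ_{j=0}^{l-1} binomial(n, j); that is, the number of binary words of length n containing no occurrence of p equals the sum of binomial(n, j) for j from 0 to l−1. -/
/-- `occ p w` is the number of occurrences of `p` as a subsequence of `w`,
i.e. the number of choices of indices `i₁ < ⋯ < i_l` in `w` matching `p`. -/
def occ (p w : List Bool) : ℕ := w.sublists.count p

/-- `B n p k` is the number of binary words of length `n` with exactly `k` occurrences of `p`. -/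
noncomputable def B (n : ℕ) (p : List Bool) (k : ℕ) : ℕ :=
  Nat.card {w : List Bool // w.length = n ∧ occ p w = k}

/-- The list of runs (maximal blocks of consecutive equal letters) of a binary word. -/

def allW : ℕ → List (List Bool)
  | 0 => [[]]
  | n+1 => (allW n).flatMap fun w => [false :: w, true :: w]

lemma mem_allW (n : ℕ) (w : List Bool) : w ∈ allW n ↔ w.length = n := by
  induction n generalizing w with
  | zero => simp [allW, List.length_eq_zero_iff]
  | succ n ih =>
    simp only [allW, List.mem_flatMap, List.mem_cons, List.mem_singleton]
    constructor
    · rintro ⟨w', hw', (rfl | rfl | h)⟩ <;> simp_all [ih]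
    · intro h
      match w with
      | [] => simp at h
      | b :: w' =>
        refine ⟨w', (ih w').mpr (by simpa using h), ?_⟩
        cases b <;> simp

lemma nodup_allW (n : ℕ) : (allW n).Nodup := by
  induction n with
  | zero => simp [allW]
  | succ n ih =>
    rw [allW, List.nodup_flatMap]
    refine ⟨fun w _ => by simp, ?_⟩
    refine ih.imp ?_
    intro w₁ w₂ hne
    simp only [Function.onFun, List.disjoint_left]
    intro x hx hx'
    simp only [List.mem_cons, List.mem_singleton, List.not_mem_nil] at hx hx'
    rcases hx with rfl | rfl | h <;> simp_all

lemma sublist_cons_of_ne {a b : Bool} (h : a ≠ b) (p w : List Bool) :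
    (a :: p).Sublist (b :: w) ↔ (a :: p).Sublist w := by
  constructor
  · intro hs
    cases hs with
    | cons _ h' => exact h'
    | cons_cons => exact absurd rfl h
  · exact fun hs => hs.cons b

lemma countP_allW_succ (P : List Bool → Bool) (n : ℕ) :
    (allW (n+1)).countP P
      = (allW n).countP (fun w => P (false :: w)) + (allW n).countP (fun w => P (true :: w)) := by
  rw [allW, List.countP_flatMap]
  induction allW n with
  | nil => simp
  | cons w l ih =>
    simp only [List.map_cons, List.sum_cons, List.countP_cons, Function.comp, ih]
    simp [List.countP_cons]
    ring

lemma pascal_sum (n l : ℕ) :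
    ∑ j ∈ Finset.range (l+1), (n+1).choose j
      = (∑ j ∈ Finset.range l, n.choose j) + ∑ j ∈ Finset.range (l+1), n.choose j := by
  rw [Finset.sum_range_succ' _ l, Finset.sum_range_succ' (fun j => n.choose j) l]
  simp only [Nat.choose_succ_succ, Nat.choose_zero_right, Finset.sum_add_distrib]
  ring

lemma count_avoid (n : ℕ) (p : List Bool) :
    (allW n).countP (fun w => !decide (p.Sublist w))
      = ∑ j ∈ Finset.range p.length, n.choose j := by
  induction n generalizing p with
  | zero =>
    cases p with
    | nil => simp [allW]
    | cons a p' =>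
      simp only [allW, List.countP_cons, List.countP_nil]
      simp [Finset.sum_range_succ', Nat.choose_zero_succ]
  | succ n ih =>
    cases p with
    | nil => simp [List.countP_eq_zero]
    | cons a p' =>
      rw [countP_allW_succ]
      have key : ∀ b : Bool,
          ((allW n).countP fun w => !decide ((a :: p').Sublist (b :: w)))
            = if a = b then (allW n).countP (fun w => !decide (p'.Sublist w))
              else (allW n).countP (fun w => !decide ((a :: p').Sublist w)) := by
        intro b
        by_cases hab : a = b
        · subst hab
          simp only [if_pos rfl]
          congr 1; funext w; simp [List.cons_sublist_cons]
        · simp only [if_neg hab]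
          congr 1; funext w; simp [sublist_cons_of_ne hab]
      rw [key false, key true, ih, ih]
      cases a <;> simp <;>
        · rw [pascal_sum]; try ring

def runs (p : List Bool) : List (List Bool) := p.splitBy (· == ·)

/-- The number of runs of a binary word. -/
def numRuns (p : List Bool) : ℕ := (runs p).length

/-- The number of runs of size `i` of a binary word. -/
def numRunsOfSize (p : List Bool) (i : ℕ) : ℕ := ((runs p).map List.length).count i

/-- `maxOcc n p` is the maximum number of occurrences of `p` among binary words of length `n`. -/
noncomputable def maxOcc (n : ℕ) (p : List Bool) : ℕ :=
  sSup {k | ∃ w : List Bool, w.length = n ∧ occ p w = k}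

/-- `p` has an internal zero at `n` if the sequence `(B n p k)_{k ≥ 0}` has an internal zero. -/
def HasInternalZeroAt (p : List Bool) (n : ℕ) : Prop :=
  ∃ k₁ k₂ k₃ : ℕ, k₁ < k₂ ∧ k₂ < k₃ ∧ B n p k₁ ≠ 0 ∧ B n p k₂ = 0 ∧ B n p k₃ ≠ 0

theorem B_zero_eq_sum_choose (p : List Bool) (l : ℕ) (hl : p.length = l) (n : ℕ) :
    B n p 0 = ∑ j ∈ Finset.range l, n.choose j := by

  subst hl
  set F : Finset (List Bool) := ((allW n).filter (fun w => !decide (p.Sublist w))).toFinset with hF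
  have hmem : ∀ w : List Bool, (w.length = n ∧ occ p w = 0) ↔ w ∈ F := by
    intro w
    simp [hF, List.mem_toFinset, List.mem_filter, mem_allW, occ, List.count_eq_zero,
      List.mem_sublists, and_comm]
  have h1 : B n p 0 = F.card := by
    rw [B, Nat.card_congr (Equiv.subtypeEquivRight hmem), Nat.card_eq_fintype_card,
      Fintype.card_coe]
  rw [h1, hF, List.toFinset_card_of_nodup ((nodup_allW n).filter _),
    ← List.countP_eq_length_filter, count_avoid]
end

section
/- Let p be a binary word of length l, and for each i ≥ 1 let r_i be the number of runs of p of size i. Then for any k ≥ 2, the number of binary words of length l + 1 containing exactly k occurrences of p equals r_{k−1}; that is, B_{l+1,p}(k) = r_{k−1}. -/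
open List in
private def occ2 : List Bool → List Bool → ℕ
  | [], _ => 1
  | _ :: _, [] => 0
  | b :: q, a :: w => occ2 (b :: q) w + if a = b then occ2 q w else 0

namespace BRunAux
open List

theorem occ2_cons_cons (b a : Bool) (q w : List Bool) :
    occ2 (b :: q) (a :: w) = occ2 (b :: q) w + if a = b then occ2 q w else 0 := rfl

theorem occ2_nil (w : List Bool) : occ2 [] w = 1 := by cases w <;> rfl

theorem occ_eq_occ2 (p w : List Bool) : occ p w = occ2 p w := by
  induction w generalizing p with
  | nil => cases p <;> simp [occ, occ2]
  | cons a w ih =>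
    rw [occ, sublists_cons]
    simp only [List.bind_eq_flatMap, count_flatMap]
    have h1 : (map (count p ∘ fun x => [x, a :: x]) w.sublists).sum
        = count p w.sublists + countP (fun x => a :: x == p) w.sublists := by
      induction w.sublists with
      | nil => simp
      | cons s S ihS =>
        simp only [map_cons, sum_cons, ihS, count_cons, countP_cons, Function.comp]
        simp [count_cons, count_nil]
        ring_nf
    rw [h1]
    cases p with
    | nil =>
      have h2 : countP (fun x => a :: x == ([] : List Bool)) w.sublists = 0 := by
        apply countP_eq_zero.2; intro x hx; simp
      rw [h2]; simpa [occ2, occ] using ih []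
    | cons b q =>
      have h2 : countP (fun x => a :: x == (b :: q)) w.sublists
          = if a = b then count q w.sublists else 0 := by
        by_cases h : a = b
        · subst h
          simp only [if_pos rfl, count]
          apply countP_congr; intro x hx; simp
        · rw [if_neg h]
          apply countP_eq_zero.2; intro x hx; simp [h]
      rw [h2, occ2, ← occ, ← occ, ih]
      by_cases h : a = b <;> simp [h, ih]

theorem occ2_of_len_lt : ∀ p w : List Bool, w.length < p.length → occ2 p w = 0
  | [], w, h => by simp at h
  | b :: q, [], h => rfl
  | b :: q, a :: w, h => by
    rw [occ2, occ2_of_len_lt (b :: q) w (by simpa using Nat.lt_of_succ_lt h)]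
    by_cases hab : a = b
    · rw [occ2_of_len_lt q w (by simpa using Nat.lt_of_succ_lt_succ h)]; simp [hab]
    · simp [hab]

theorem occ2_of_len_eq : ∀ p w : List Bool, w.length = p.length →
    occ2 p w = if p = w then 1 else 0
  | [], [], _ => by simp [occ2_nil]
  | b :: q, a :: w, h => by
    simp only [length_cons, Nat.succ_inj] at h
    rw [occ2, occ2_of_len_lt (b :: q) w (by simp [h])]
    by_cases hab : a = b
    · subst hab
      rw [occ2_of_len_eq q w h]
      by_cases hqw : q = w <;> simp [hqw]
    · have : ¬(b :: q = a :: w) := by intro hh; injection hh with h1 _; exact hab h1.symm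
      simp [hab, this]

theorem occ2_refl (w : List Bool) : occ2 w w = 1 := by simp [occ2_of_len_eq w w rfl]

theorem cons_eq_append_singleton {a b : Bool} :
    ∀ {L : List Bool}, a :: L = L ++ [b] → a = b ∧ ∀ x ∈ L, x = a
  | [], h => by simpa using h
  | c :: L, h => by
    rw [cons_append] at h
    injection h with h1 h2
    subst h1
    obtain ⟨hab, hL⟩ := cons_eq_append_singleton h2
    exact ⟨hab, by simpa using hL⟩

theorem occ2_run_base (b : Bool) (C : List Bool) (hC : C.head? ≠ some b) :
    ∀ n : ℕ, occ2 (replicate n b ++ C) (replicate (n+1) b ++ C) = n + 1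
  | 0 => by
    simp only [Nat.zero_add, replicate_zero, replicate_one, nil_append, singleton_append]
    cases C with
    | nil => simp [occ2, occ2_nil]
    | cons c C' =>
      have hcb : ¬(b = c) := by simp at hC; tauto
      rw [occ2_cons_cons, occ2_refl, if_neg hcb]
  | n + 1 => by
    have e1 : replicate (n+1+1) b ++ C = b :: (replicate (n+1) b ++ C) := by
      rw [replicate_succ, cons_append]
    have e2 : replicate (n+1) b ++ C = b :: (replicate n b ++ C) := by
      rw [replicate_succ, cons_append]
    rw [e1, e2, occ2_cons_cons, ← e2, occ2_refl, if_pos rfl, occ2_run_base b C hC n]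
    omega

theorem occ2_run (b : Bool) (C : List Bool) (hC : C.head? ≠ some b) (n : ℕ) :
    ∀ A : List Bool, A.getLast? ≠ some b →
      occ2 (A ++ replicate n b ++ C) (A ++ replicate (n+1) b ++ C) = n + 1
  | [], _ => by simpa using occ2_run_base b C hC n
  | a :: A', hA => by
    simp only [cons_append]
    rw [occ2_cons_cons, if_pos rfl]
    have hne : a :: (A' ++ replicate n b ++ C) ≠ A' ++ replicate (n+1) b ++ C := by
      intro h
      have h2 : a :: (A' ++ replicate n b) = A' ++ replicate (n+1) b := by
        apply append_cancel_right (bs := C)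
        simpa [append_assoc, cons_append] using h
      have h3 : a :: (A' ++ replicate n b) = (A' ++ replicate n b) ++ [b] := by
        rw [h2, replicate_succ' , append_assoc]
      obtain ⟨hab, hall⟩ := cons_eq_append_singleton h3
      have hcons : ∀ x ∈ a :: A', x = a := by
        intro x hx
        rcases mem_cons.1 hx with h | h
        · exact h
        · exact hall x (mem_append_left _ h)
      have hlast : (a :: A').getLast? = some b := by
        rw [getLast?_eq_getLast (cons_ne_nil _ _)]
        rw [hcons _ (getLast_mem _), hab]
      exact hA hlast
    have hlen : (A' ++ replicate (n+1) b ++ C).length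
        = (a :: (A' ++ replicate n b ++ C)).length := by
      simp [length_replicate]; omega
    rw [occ2_of_len_eq _ _ hlen, if_neg hne]
    have hA' : A'.getLast? ≠ some b := by
      cases A' with
      | nil => simp
      | cons c t => rwa [getLast?_cons_cons] at hA
    rw [occ2_run b C hC n A' hA']
    omega

theorem occ2_pos_decomp : ∀ (w p : List Bool), w.length = p.length + 1 → occ2 p w ≠ 0 →
    ∃ A b C, w = A ++ b :: C ∧ p = A ++ C
  | [], p, hlen, _ => by simp at hlen
  | a :: w, [], hlen, _ => by
    simp only [length_cons, length_nil, Nat.zero_add, Nat.succ_inj] at hlen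
    exact ⟨[], a, w, by simp, by simp [eq_nil_of_length_eq_zero hlen]⟩
  | a :: w, b :: q, hlen, hocc => by
    simp only [length_cons, Nat.succ_inj] at hlen
    rw [occ2_cons_cons] at hocc
    by_cases hw : w = b :: q
    · exact ⟨[], a, w, by simp, by simp [hw]⟩
    · rw [occ2_of_len_eq _ _ (by simp [hlen]), if_neg (fun h => hw h.symm)] at hocc
      by_cases hab : a = b
      · subst hab
        rw [if_pos rfl] at hocc
        obtain ⟨A, c, C, hw', hp'⟩ := occ2_pos_decomp w q hlen (by simpa using hocc)
        exact ⟨a :: A, c, C, by simp [hw'], by simp [hp']⟩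
      · simp [hab] at hocc

theorem exists_leading_run (b : Bool) :
    ∀ C : List Bool, ∃ n C', C = replicate n b ++ C' ∧ C'.head? ≠ some b
  | [] => ⟨0, [], by simp, by simp⟩
  | c :: C => by
    by_cases hc : c = b
    · obtain ⟨n, C', h1, h2⟩ := exists_leading_run b C
      exact ⟨n + 1, C', by simp [replicate_succ, hc, h1], h2⟩
    · exact ⟨0, c :: C, by simp, by simpa using hc⟩

theorem normalize_decomp (b : Bool) (A : List Bool) :
    ∀ C : List Bool, ∃ A₂ b₂ m C₂,
      A ++ b :: C = A₂ ++ replicate (m+1) b₂ ++ C₂ ∧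
      A ++ C = A₂ ++ replicate m b₂ ++ C₂ ∧
      A₂.getLast? ≠ some b₂ ∧ C₂.head? ≠ some b₂ := by
  induction A using List.reverseRecOn with
  | nil =>
    intro C
    obtain ⟨n, C', h1, h2⟩ := exists_leading_run b C
    exact ⟨[], b, n, C', by simp [h1, replicate_succ], by simp [h1], by simp, h2⟩
  | append_singleton A₀ x ih =>
    intro C
    by_cases hx : x = b
    · obtain ⟨A₂, b₂, m, C₂, h1, h2, h3, h4⟩ := ih (b :: C)
      refine ⟨A₂, b₂, m, C₂, ?_, ?_, h3, h4⟩
      · rw [← h1]; simp [hx]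
      · rw [← h2]; simp [hx]
    · obtain ⟨n, C', h1, h2⟩ := exists_leading_run b C
      refine ⟨A₀ ++ [x], b, n, C', ?_, ?_, ?_, h2⟩
      · rw [h1]; simp [replicate_succ]
      · rw [h1]; simp
      · simpa using hx

def Const (r : List Bool) : Prop := ∀ x ∈ r, ∀ y ∈ r, x = y

def IsRuns (rs : List (List Bool)) : Prop :=
  (∀ r ∈ rs, r ≠ [] ∧ Const r) ∧ rs.IsChain (fun r s => r.head? ≠ s.head?)

theorem const_of_chain' : ∀ r : List Bool, r.IsChain (fun x y => (x == y) = true) → Const r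
  | [], _ => by intro x hx; simp at hx
  | [a], _ => by intro x hx y hy; simp at hx hy; simp [hx, hy]
  | a :: b :: t, h => by
    rw [isChain_cons_cons] at h
    obtain ⟨hab, h2⟩ := h
    have hab' : a = b := by simpa using hab
    subst hab'
    have ih := const_of_chain' (a :: t) h2
    intro x hx y hy
    rcases mem_cons.1 hx with rfl | hx'
    · rcases mem_cons.1 hy with rfl | hy'
      · rfl
      · exact ih x (mem_cons_self) y hy'
    · rcases mem_cons.1 hy with rfl | hy'
      · exact ih x hx' y (mem_cons_self)
      · exact ih x hx' y hy' 

theorem const_head?_eq_getLast? {r : List Bool} (h : Const r) : r.getLast? = r.head? := by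
  cases r with
  | nil => rfl
  | cons a t =>
    rw [getLast?_eq_getLast (cons_ne_nil _ _), head?_cons]
    exact congrArg some (h _ (getLast_mem _) a (mem_cons_self))

theorem chain_transport : ∀ rs : List (List Bool), (∀ r ∈ rs, r ≠ [] ∧ Const r) →
    rs.IsChain (fun r s => ∃ ha hb, ((r.getLast ha == s.head hb) = false)) →
    rs.IsChain (fun r s => r.head? ≠ s.head?)
  | [], _, _ => isChain_nil
  | [r], _, _ => isChain_singleton _
  | r :: s :: t, hmem, h => by
    rw [isChain_cons_cons] at h ⊢
    obtain ⟨⟨ha, hb, hrs⟩, h2⟩ := h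
    refine ⟨?_, chain_transport (s :: t) (fun x hx => hmem x (mem_cons_of_mem _ hx)) h2⟩
    have hconst := (hmem r (mem_cons_self)).2
    have h3 : r.getLast ha = r.head (by exact ha) := by
      exact hconst _ (getLast_mem _) _ (head_mem _)
    rw [head?_eq_head ha, head?_eq_head hb]
    intro hcontra
    injection hcontra with hc
    rw [← h3] at hc
    simp [hc] at hrs

theorem isRuns_runs (p : List Bool) : IsRuns (runs p) := by
  constructor
  · intro r hr
    exact ⟨ne_nil_of_mem_splitBy hr, const_of_chain' r (isChain_of_mem_splitBy hr)⟩
  · exact chain_transport _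
      (fun r hr => ⟨ne_nil_of_mem_splitBy hr, const_of_chain' r (isChain_of_mem_splitBy hr)⟩)
      (isChain_getLast_head_splitBy _ p)

theorem flatten_runs (p : List Bool) : (runs p).flatten = p := flatten_splitBy _ p

theorem head?_flatten_isRuns {r : List Bool} {t : List (List Bool)} (hr : r ≠ []) :
    ((r :: t).flatten).head? = r.head? := by
  rw [flatten_cons, head?_append_of_ne_nil _ hr]

theorem getLast?_flatten_isRuns : ∀ (rs : List (List Bool)), (∀ r ∈ rs, r ≠ [] ∧ Const r) →
    ∀ (hne : rs ≠ []), (rs.flatten).getLast? = (rs.getLast hne).head?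
  | [], _, h => absurd rfl h
  | [r], hmem, _ => by
    have := (hmem r (mem_cons_self))
    rw [flatten_cons, flatten_nil, append_nil, getLast_singleton,
      ← const_head?_eq_getLast? this.2]
  | r :: s :: t, hmem, _ => by
    rw [flatten_cons, getLast?_append, getLast_cons (cons_ne_nil _ _)]
    have ih := getLast?_flatten_isRuns (s :: t) (fun x hx => hmem x (mem_cons_of_mem _ hx))
      (cons_ne_nil _ _)
    rw [ih]
    have hs : ((s :: t).getLast (cons_ne_nil _ _)).head? ≠ none := by
      have hmem' : (s :: t).getLast (cons_ne_nil _ _) ∈ s :: t := getLast_mem _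
      have := (hmem _ (mem_cons_of_mem _ hmem')).1
      simpa [head?_eq_none_iff] using this
    cases hh : ((s :: t).getLast (cons_ne_nil _ _)).head? with
    | none => exact absurd hh hs
    | some x => simp


theorem IsRuns.tail {r : List Bool} {t : List (List Bool)} (h : IsRuns (r :: t)) : IsRuns t :=
  ⟨fun x hx => h.1 x (mem_cons_of_mem _ hx), h.2.tail⟩

-- helper: in the situation r1 ++ flatten t1 = r2 ++ flatten t2 with r2 = r1 ++ a', a' must be []
theorem runs_unique_helper {r1 r2 : List Bool} {t1 t2 : List (List Bool)}
    (h1 : IsRuns (r1 :: t1)) (h2 : IsRuns (r2 :: t2))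
    (heq : r1 ++ t1.flatten = r2 ++ t2.flatten) {a' : List Bool}
    (ha' : r2 = r1 ++ a') : a' = [] := by
  by_contra hne
  -- flatten t1 = a' ++ flatten t2
  have hft : t1.flatten = a' ++ t2.flatten := by
    apply append_cancel_left (as := r1)
    rw [heq, ha', append_assoc]
  -- head of a' equals head of r1 (both in r2, which is Const)
  have hr2const : Const r2 := (h2.1 r2 (mem_cons_self)).2
  have hr1ne : r1 ≠ [] := (h1.1 r1 (mem_cons_self)).1
  have hhead_mem : a'.head hne ∈ r2 := ha' ▸ mem_append_right _ (head_mem hne)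
  have hr1head_mem : r1.head hr1ne ∈ r2 := ha' ▸ mem_append_left _ (head_mem hr1ne)
  have hheads : a'.head hne = r1.head hr1ne := hr2const _ hhead_mem _ hr1head_mem
  -- t1 is nonempty
  cases t1 with
  | nil => rw [flatten_nil] at hft; exact hne (by simpa using (append_eq_nil_iff.1 hft.symm).1)
  | cons s t1' =>
    have hs_ne : s ≠ [] := (h1.1 s (mem_cons_of_mem _ (mem_cons_self))).1
    have hchain : r1.head? ≠ s.head? := (isChain_cons_cons.1 h1.2).1
    -- head? (flatten (s :: t1')) = head? s
    have hh1 : ((s :: t1').flatten).head? = s.head? := by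
      rw [flatten_cons, head?_append_of_ne_nil _ hs_ne]
    have hh2 : ((s :: t1').flatten).head? = a'.head? := by
      rw [hft, head?_append_of_ne_nil _ hne]
    apply hchain
    rw [← hh1, hh2, head?_eq_head hne, head?_eq_head hr1ne, hheads]

theorem runs_unique : ∀ rs1 rs2 : List (List Bool), IsRuns rs1 → IsRuns rs2 →
    rs1.flatten = rs2.flatten → rs1 = rs2
  | [], [], _, _, _ => rfl
  | [], r2 :: t2, _, h2, heq => by
    exfalso
    have := (h2.1 r2 (mem_cons_self)).1
    rw [flatten_nil, eq_comm, flatten_eq_nil_iff] at heq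
    exact this (heq r2 (mem_cons_self))
  | r1 :: t1, [], h1, _, heq => by
    exfalso
    have := (h1.1 r1 (mem_cons_self)).1
    rw [flatten_nil, flatten_eq_nil_iff] at heq
    exact this (heq r1 (mem_cons_self))
  | r1 :: t1, r2 :: t2, h1, h2, heq => by
    rw [flatten_cons, flatten_cons] at heq
    have hr12 : r1 = r2 := by
      rcases append_eq_append_iff.1 heq with ⟨a', ha', _⟩ | ⟨c', hc', _⟩
      · rw [runs_unique_helper h1 h2 heq ha'] at ha'; simpa using ha'.symm
      · rw [runs_unique_helper h2 h1 heq.symm hc'] at hc'; simpa using hc'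
    subst hr12
    have hft : t1.flatten = t2.flatten := append_cancel_left heq
    rw [runs_unique t1 t2 h1.tail h2.tail hft]


def mkRuns : List Bool → List (List Bool)
  | [] => []
  | a :: l =>
    match mkRuns l with
    | [] => [[a]]
    | r :: rs => if r.head? = some a then (a :: r) :: rs else [a] :: r :: rs

theorem mkRuns_spec : ∀ l : List Bool, (mkRuns l).flatten = l ∧ IsRuns (mkRuns l)
  | [] => ⟨rfl, fun r hr => absurd hr (by simp [mkRuns]), by simp [mkRuns]⟩
  | a :: l => by
    obtain ⟨hf, hmem, hchain⟩ := mkRuns_spec l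
    cases hm : mkRuns l with
    | nil =>
      have heq : mkRuns (a :: l) = [[a]] := by rw [mkRuns, hm]
      rw [hm, flatten_nil] at hf
      subst hf
      rw [heq]
      refine ⟨by simp, ?_, ?_⟩
      · intro r hr
        simp only [mem_singleton] at hr
        subst hr
        exact ⟨cons_ne_nil _ _, by intro x hx y hy; simp at hx hy; rw [hx, hy]⟩
      · exact isChain_singleton _
    | cons r rs =>
      have heq : mkRuns (a :: l) = if r.head? = some a then (a :: r) :: rs
          else [a] :: r :: rs := by rw [mkRuns, hm]
      rw [heq]
      rw [hm] at hf hmem hchain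
      have hrne : r ≠ [] := (hmem r (mem_cons_self)).1
      have hrconst : Const r := (hmem r (mem_cons_self)).2
      by_cases hh : r.head? = some a
      · rw [if_pos hh]
        have hha : r.head hrne = a := by
          rw [head?_eq_head hrne] at hh; exact Option.some_inj.1 hh
        constructor
        · rw [flatten_cons, cons_append, ← flatten_cons, hf]
        constructor
        · intro s hs
          rcases mem_cons.1 hs with rfl | hs'
          · refine ⟨cons_ne_nil _ _, ?_⟩
            have hxa : ∀ x ∈ a :: r, x = a := by
              intro x hx
              rcases mem_cons.1 hx with rfl | hx'
              · rfl
              · rw [hrconst x hx' (r.head hrne) (head_mem hrne), hha]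
            intro x hx y hy; rw [hxa x hx, hxa y hy]
          · exact hmem s (mem_cons_of_mem _ hs')
        · have hhead : (a :: r).head? = r.head? := by rw [head?_cons, hh]
          cases rs with
          | nil => exact isChain_singleton _
          | cons s t =>
            rw [isChain_cons_cons] at hchain ⊢
            exact ⟨by rw [hhead]; exact hchain.1, hchain.2⟩
      · rw [if_neg hh]
        constructor
        · rw [flatten_cons, singleton_append, hf]
        constructor
        · intro s hs
          rcases mem_cons.1 hs with rfl | hs'
          · exact ⟨cons_ne_nil _ _, by intro x hx y hy; simp at hx hy; rw [hx, hy]⟩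
          · exact hmem s hs'
        · rw [isChain_cons_cons]
          exact ⟨by simpa [eq_comm] using hh, hchain⟩


theorem isRuns_middle_parts {X Y : List (List Bool)} {r : List Bool}
    (h : IsRuns (X ++ r :: Y)) : IsRuns X ∧ IsRuns Y ∧ r ≠ [] ∧ Const r := by
  obtain ⟨hmem, hchain⟩ := h
  rw [isChain_append] at hchain
  refine ⟨⟨fun s hs => hmem s (by simp [hs]), hchain.1⟩,
    ⟨fun s hs => hmem s (by simp [hs]), hchain.2.1.tail⟩,
    (hmem r (by simp)).1, (hmem r (by simp)).2⟩

theorem isRuns_middle_iff {X Y : List (List Bool)} {r : List Bool}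
    (hX : IsRuns X) (hY : IsRuns Y) (hrne : r ≠ []) (hrc : Const r) :
    IsRuns (X ++ r :: Y) ↔
      X.flatten.getLast? ≠ r.head? ∧ Y.flatten.head? ≠ r.head? := by
  have hmem : ∀ s ∈ X ++ r :: Y, s ≠ [] ∧ Const s := by
    intro s hs
    rcases mem_append.1 hs with h | h
    · exact hX.1 s h
    · rcases mem_cons.1 h with rfl | h'
      · exact ⟨hrne, hrc⟩
      · exact hY.1 s h'
  have e1 : (∀ x ∈ X.getLast?, ∀ y ∈ (r :: Y).head?, x.head? ≠ y.head?)
      ↔ X.flatten.getLast? ≠ r.head? := by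
    cases hXn : X with
    | nil =>
      simp only [getLast?_nil, flatten_nil, getLast?_nil]
      constructor
      · intro _ hc
        rw [head?_eq_head hrne] at hc; cases hc
      · intro _ x hx; simp at hx
    | cons x0 t0 =>
      rw [← hXn, getLast?_eq_getLast (by rw [hXn]; exact cons_ne_nil _ _),
        getLast?_flatten_isRuns X hX.1 (by rw [hXn]; exact cons_ne_nil _ _)]
      simp
  have e2 : (∀ y ∈ Y.head?, r.head? ≠ y.head?) ↔ Y.flatten.head? ≠ r.head? := by
    cases hYn : Y with
    | nil =>
      simp only [head?_nil, flatten_nil]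
      constructor
      · intro _ hc
        rw [head?_eq_head hrne] at hc; cases hc
      · intro _ y hy; simp at hy
    | cons y0 t0 =>
      have hy0 : y0 ≠ [] := (hY.1 y0 (by rw [hYn]; exact mem_cons_self)).1
      rw [head?_flatten_isRuns hy0, head?_cons]
      constructor
      · intro h hc
        exact h y0 rfl (by rw [hc])
      · intro h y hy hc
        simp only [Option.mem_def, Option.some_inj] at hy
        subst hy
        exact h (by rw [hc])
  constructor
  · intro h
    obtain ⟨_, hchain⟩ := h
    rw [isChain_append] at hchain
    refine ⟨e1.1 ?_, e2.1 (isChain_cons.1 hchain.2.1).1⟩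
    intro x hx y hy
    have := hchain.2.2 x hx y hy
    simp only [head?_cons, Option.mem_def, Option.some_inj] at hy
    subst hy
    exact this
  · intro ⟨h1, h2⟩
    refine ⟨hmem, ?_⟩
    rw [isChain_append]
    refine ⟨hX.2, isChain_cons.2 ⟨e2.2 h2, hY.2⟩, ?_⟩
    intro x hx y hy
    simp only [head?_cons, Option.mem_def, Option.some_inj] at hy
    subst hy
    exact e1.2 h1 x hx r rfl

theorem countP_eq_countP_range (L : List (List Bool)) (pred : List Bool → Bool) :
    L.countP pred = (List.range L.length).countP (fun j => pred (L.getD j [])) := by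
  induction L with
  | nil => simp
  | cons r t ih =>
    rw [countP_cons, length_cons, range_succ_eq_map, countP_cons, countP_map]
    have hfun : ((fun j => pred ((r :: t).getD j [])) ∘ Nat.succ)
        = fun j => pred (t.getD j []) := by
      funext j; simp [Nat.succ_eq_add_one]
    rw [hfun, ← ih]
    simp


/-- The word obtained from `p` by extending its `j`-th run by one letter. -/
def auxF (p : List Bool) (k : ℕ) (j : ℕ) : List Bool :=
  ((runs p).take j).flatten ++ replicate k (((runs p).getD j []).headD false)
    ++ ((runs p).drop (j+1)).flatten

theorem headD_replicate_of_pos {m : ℕ} (hm : 0 < m) (b : Bool) :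
    (replicate m b).headD false = b := by
  cases m with
  | zero => omega
  | succ t => simp [replicate_succ]

theorem head?_replicate_of_pos {m : ℕ} (hm : 0 < m) (b : Bool) :
    (replicate m b).head? = some b := by
  cases m with
  | zero => omega
  | succ t => simp [replicate_succ]

theorem auxF_spec {p : List Bool} {k : ℕ} (hk : 2 ≤ k) {j : ℕ} (hj : j < (runs p).length)
    (hlenj : ((runs p).getD j []).length = k - 1) :
    (auxF p k j).length = p.length + 1 ∧ occ p (auxF p k j) = k ∧
    IsRuns ((runs p).take j ++
      (replicate k (((runs p).getD j []).headD false)) :: (runs p).drop (j+1)) ∧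
    ((runs p).take j ++
      (replicate k (((runs p).getD j []).headD false)) :: (runs p).drop (j+1)).flatten
      = auxF p k j := by
  set rs := runs p with hrs
  have hsplit : rs.take j ++ rs[j] :: rs.drop (j+1) = rs := by
    rw [← drop_eq_getElem_cons hj, take_append_drop]
  have hgd : rs.getD j [] = rs[j] := getD_eq_getElem rs [] hj
  set b : Bool := rs[j].headD false with hb
  have hIs : IsRuns rs := isRuns_runs p
  have hmemj : rs[j] ∈ rs := getElem_mem hj
  have hjne : rs[j] ≠ [] := (hIs.1 _ hmemj).1
  have hjc : Const rs[j] := (hIs.1 _ hmemj).2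
  have hbj : rs[j].head? = some b := by
    cases hc : rs[j] with
    | nil => exact absurd hc hjne
    | cons x t => rw [hb, hc]; rfl
  have hrepl : rs[j] = replicate (k-1) b := by
    rw [eq_replicate_iff]
    refine ⟨by rw [← hgd]; exact hlenj, ?_⟩
    intro x hx
    have hx2 : x = rs[j].head hjne := hjc x hx _ (head_mem hjne)
    rw [head?_eq_head hjne, Option.some_inj] at hbj
    rw [hx2, hbj]
  have hIs' : IsRuns (rs.take j ++ rs[j] :: rs.drop (j+1)) := by rw [hsplit]; exact hIs
  obtain ⟨hX, hY, _, _⟩ := isRuns_middle_parts hIs'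
  have hseam := (isRuns_middle_iff hX hY hjne hjc).1 hIs'
  rw [hbj] at hseam
  have hk1 : k - 1 + 1 = k := by omega
  have hkpos : 0 < k := by omega
  have hreplne : replicate k b ≠ [] := by
    intro h; rw [← length_eq_zero_iff] at *; rw [length_replicate] at h; omega
  have hreplc : Const (replicate k b) := by
    intro x hx y hy
    rw [eq_of_mem_replicate hx, eq_of_mem_replicate hy]
  have hIsD : IsRuns (rs.take j ++ (replicate k b) :: rs.drop (j+1)) := by
    refine (isRuns_middle_iff hX hY hreplne hreplc).2 ?_
    rw [head?_replicate_of_pos hkpos]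
    exact hseam
  have hp : p = (rs.take j).flatten ++ replicate (k-1) b ++ (rs.drop (j+1)).flatten := by
    conv_lhs => rw [← flatten_runs p, ← hrs, ← hsplit]
    rw [flatten_append, flatten_cons, hrepl, ← append_assoc]
  have hF : auxF p k j
      = (rs.take j).flatten ++ replicate k b ++ (rs.drop (j+1)).flatten := by
    rw [auxF, ← hrs, hgd]
  have hocc : occ p (auxF p k j) = k := by
    rw [occ_eq_occ2, hF, hp]
    rw [← hk1]
    exact occ2_run b _ hseam.2 (k-1) _ hseam.1
  refine ⟨?_, hocc, ?_, ?_⟩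
  · rw [hF]
    conv_rhs => rw [hp]
    simp only [length_append, length_replicate]
    omega
  · rw [hgd]; exact hIsD
  · rw [hgd, hF, flatten_append, flatten_cons, ← append_assoc]

theorem auxF_inj_lt {p : List Bool} {k : ℕ} (hk : 2 ≤ k) {j j' : ℕ}
    (hj : j < (runs p).length) (hj' : j' < (runs p).length)
    (hlenj : ((runs p).getD j []).length = k - 1)
    (hlenj' : ((runs p).getD j' []).length = k - 1)
    (hlt : j < j') (hFF : auxF p k j = auxF p k j') : False := by
  obtain ⟨_, _, hIsD, hfD⟩ := auxF_spec hk hj hlenj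
  obtain ⟨_, _, hIsD', hfD'⟩ := auxF_spec hk hj' hlenj'
  set rs := runs p with hrs
  have hDD := runs_unique _ _ hIsD hIsD' (by rw [hfD, hfD', hFF])
  have hjtake : (rs.take j).length = j := by rw [length_take]; omega
  have hjtake' : (rs.take j').length = j' := by rw [length_take]; omega
  have e1 : (rs.take j ++ (replicate k ((rs.getD j []).headD false)) :: rs.drop (j+1)).getD j []
      = replicate k ((rs.getD j []).headD false) := by
    rw [getD_append_right _ _ _ j (by omega), hjtake, Nat.sub_self, getD_cons_zero]
  have e2 : (rs.take j' ++ (replicate k ((rs.getD j' []).headD false)) :: rs.drop (j'+1)).getD j []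
      = rs.getD j [] := by
    rw [getD_append _ _ _ j (by omega),
      getD_eq_getElem _ _ (by rw [hjtake']; exact hlt), getElem_take,
      getD_eq_getElem rs [] hj]
  have e3 := congrArg (fun L => L.getD j ([] : List Bool)) hDD
  rw [e1, e2] at e3
  have := congrArg List.length e3
  rw [length_replicate, hlenj] at this
  omega

theorem auxF_inj {p : List Bool} {k : ℕ} (hk : 2 ≤ k) {j j' : ℕ}
    (hj : j < (runs p).length) (hj' : j' < (runs p).length)
    (hlenj : ((runs p).getD j []).length = k - 1)
    (hlenj' : ((runs p).getD j' []).length = k - 1)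
    (hFF : auxF p k j = auxF p k j') : j = j' := by
  rcases lt_trichotomy j j' with h | h | h
  · exact absurd (auxF_inj_lt hk hj hj' hlenj hlenj' h hFF) not_false
  · exact h
  · exact absurd (auxF_inj_lt hk hj' hj hlenj' hlenj h hFF.symm) not_false

theorem auxF_surj {p : List Bool} {k : ℕ} (hk : 2 ≤ k) {w : List Bool}
    (hwlen : w.length = p.length + 1) (hocc : occ p w = k) :
    ∃ j, j < (runs p).length ∧ ((runs p).getD j []).length = k - 1 ∧ auxF p k j = w := by
  have hocc2 : occ2 p w = k := by rw [← occ_eq_occ2]; exact hocc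
  obtain ⟨A, b, C, hw1, hp1⟩ := occ2_pos_decomp w p hwlen (by rw [hocc2]; omega)
  obtain ⟨A₂, b₂, m, C₂, h1, h2, h3, h4⟩ := normalize_decomp b A C
  rw [← hw1] at h1
  rw [← hp1] at h2
  have hm : m + 1 = k := by
    rw [h1, h2] at hocc2
    rw [← hocc2]
    exact (occ2_run b₂ C₂ h4 m A₂ h3).symm
  have hmpos : 0 < m := by omega
  have hmk : m = k - 1 := by omega
  obtain ⟨hfA, hIsA⟩ := mkRuns_spec A₂
  obtain ⟨hfC, hIsC⟩ := mkRuns_spec C₂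
  have hreplne : replicate m b₂ ≠ [] := by
    intro h
    have := congrArg List.length h
    rw [length_replicate] at this
    simp at this
    omega
  have hreplc : Const (replicate m b₂) := by
    intro x hx y hy
    rw [eq_of_mem_replicate hx, eq_of_mem_replicate hy]
  have hIsD : IsRuns (mkRuns A₂ ++ (replicate m b₂) :: mkRuns C₂) := by
    refine (isRuns_middle_iff hIsA hIsC hreplne hreplc).2 ?_
    rw [head?_replicate_of_pos hmpos, hfA, hfC]
    exact ⟨h3, h4⟩
  have hfD : (mkRuns A₂ ++ (replicate m b₂) :: mkRuns C₂).flatten = p := by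
    rw [flatten_append, flatten_cons, hfA, hfC, ← append_assoc, ← h2]
  have hrseq : runs p = mkRuns A₂ ++ (replicate m b₂) :: mkRuns C₂ :=
    runs_unique _ _ (isRuns_runs p) hIsD (by rw [hfD, flatten_runs])
  set j := (mkRuns A₂).length with hj
  have hjlt : j < (runs p).length := by
    rw [hrseq, length_append, length_cons]; omega
  have hgd : (runs p).getD j [] = replicate m b₂ := by
    rw [hrseq, getD_append_right _ _ _ j (le_refl _), Nat.sub_self, getD_cons_zero]
  refine ⟨j, hjlt, by rw [hgd, length_replicate]; omega, ?_⟩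
  have htake : (runs p).take j = mkRuns A₂ := by
    rw [hrseq, hj]
    exact take_left
  have hdrop : (runs p).drop (j+1) = mkRuns C₂ := by
    rw [hrseq, append_cons]
    exact drop_left' (by rw [length_append]; simp [hj])
  rw [auxF, htake, hdrop, hgd, hfA, hfC, headD_replicate_of_pos hmpos, h1, ← hm]

end BRunAux

open List BRunAux in
theorem B_length_succ_eq_numRunsOfSize (p : List Bool) (l : ℕ) (hl : p.length = l)
    (k : ℕ) (hk : 2 ≤ k) :
    B (l + 1) p k = numRunsOfSize p (k - 1) := by
  subst hl
  classical
  have hRHS : numRunsOfSize p (k-1)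
      = ((List.range (runs p).length).filter
          (fun j => ((runs p).getD j []).length == k - 1)).length := by
    rw [numRunsOfSize, count_eq_countP, countP_map,
      countP_eq_countP_range, ← countP_eq_length_filter]
    exact countP_congr (fun j _ => by simp [Function.comp])
  have hcard : B (p.length + 1) p k
      = Set.ncard {w : List Bool | w.length = p.length + 1 ∧ occ p w = k} := by
    rw [B, ← Nat.card_coe_set_eq]
    rfl
  set T : Finset ℕ := ((List.range (runs p).length).filter
      (fun j => ((runs p).getD j []).length == k - 1)).toFinset with hT
  have hTcard : T.card = ((List.range (runs p).length).filter
      (fun j => ((runs p).getD j []).length == k - 1)).length :=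
    List.toFinset_card_of_nodup (List.nodup_range.filter _)
  have hTmem : ∀ j, j ∈ T ↔ j < (runs p).length ∧ ((runs p).getD j []).length = k - 1 := by
    intro j
    rw [hT, List.mem_toFinset, List.mem_filter, List.mem_range]
    simp
  have hSimage : {w : List Bool | w.length = p.length + 1 ∧ occ p w = k}
      = (auxF p k) '' ↑T := by
    ext w
    simp only [Set.mem_setOf_eq, Set.mem_image, Finset.mem_coe]
    constructor
    · intro ⟨h1, h2⟩
      obtain ⟨j, hj1, hj2, hj3⟩ := auxF_surj hk h1 h2
      exact ⟨j, (hTmem j).2 ⟨hj1, hj2⟩, hj3⟩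
    · rintro ⟨j, hjT, rfl⟩
      obtain ⟨hj1, hj2⟩ := (hTmem j).1 hjT
      obtain ⟨hl1, hl2, _, _⟩ := auxF_spec hk hj1 hj2
      exact ⟨hl1, hl2⟩
  have hInj : Set.InjOn (auxF p k) ↑T := by
    intro j hj j' hj' hFF
    obtain ⟨h1, h2⟩ := (hTmem j).1 (Finset.mem_coe.1 hj)
    obtain ⟨h1', h2'⟩ := (hTmem j').1 (Finset.mem_coe.1 hj')
    exact auxF_inj hk h1 h1' h2 h2' hFF
  rw [hcard, hSimage, Set.ncard_image_of_injOn hInj, Set.ncard_coe_finset, hTcard, hRHS]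
end

section
/- Let p = 1^i 0^j 1^k for some i, k ≥ 0 and j ≥ 1 (the concatenation of i ones, j zeros, and k ones). For any n ≥ i + j + k, the maximum number of occurrences of p in a binary word of length n equals the maximum of binomial(a, i) · binomial(b, j) · binomial(c, k) over all nonnegative integers a, b, c with a + b + c = n; that is, M_{n,p} = max{binomial(a,i)·binomial(b,j)·binomial(c,k) : a + b + c = n}. -/
/-- The binary word `1^a 0^b 1^c`. -/
def oneZeroOne (a b c : ℕ) : List Bool :=
  List.replicate a true ++ List.replicate b false ++ List.replicate c true



lemma occ_nil_right (p : List Bool) : occ p [] = if p = [] then 1 else 0 := by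
  unfold occ
  rw [List.sublists_nil]
  cases p <;> simp

lemma count_instEq (p : List Bool) (s : List (List Bool)) :
    @List.count _ List.instBEq p s = @List.count _ (instBEqOfDecidableEq) p s := by
  induction s with
  | nil => rfl
  | cons u s ih =>
    rw [@List.count_cons _ List.instBEq, @List.count_cons _ (instBEqOfDecidableEq), ih]
    by_cases h : u = p <;> simp [h]

lemma occ_eq_count' (p w : List Bool) : occ p w = List.count p w.sublists' := by
  unfold occ
  rw [count_instEq, count_instEq p w.sublists']
  exact (count_instEq p w.sublists).symm.trans (((w.sublists_perm_sublists').count_eq p).trans (count_instEq p w.sublists'))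

lemma occ_cons_right (p : List Bool) (a : Bool) (w : List Bool) :
    occ p (a :: w) = occ p w + List.count p (List.map (a :: ·) w.sublists') := by
  rw [occ_eq_count', occ_eq_count', List.sublists'_cons, List.count_append]

lemma occ_nil_left (w : List Bool) : occ [] w = 1 := by
  induction w with
  | nil => simp [occ_nil_right]
  | cons a w ih =>
    rw [occ_cons_right, ih]
    have : ([] : List Bool) ∉ List.map (a :: ·) w.sublists' := by simp
    simp [List.count_eq_zero.2 this]

lemma count_cons_map (x : Bool) (p : List Bool) (s : List (List Bool)) :
    List.count (x :: p) (List.map (x :: ·) s) = List.count p s := by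
  induction s with
  | nil => simp
  | cons u s ih => simp [List.count_cons, ih]

lemma occ_cons_cons (x : Bool) (p : List Bool) (a : Bool) (w : List Bool) :
    occ (x :: p) (a :: w) = occ (x :: p) w + if x = a then occ p w else 0 := by
  rw [occ_cons_right]
  congr 1
  by_cases h : x = a
  · rw [if_pos h]
    subst h
    rw [count_cons_map]
    exact (occ_eq_count' p w).symm
  · rw [if_neg h]
    refine List.count_eq_zero.2 ?_
    simp only [List.mem_map]
    rintro ⟨u, -, hu⟩
    injection hu with h1 _
    exact h h1.symm

lemma occ_cons_nil (x : Bool) (p : List Bool) : occ (x :: p) [] = 0 := by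
  simp [occ_nil_right]

lemma occ_le_cons (p : List Bool) (a : Bool) (w : List Bool) : occ p w ≤ occ p (a :: w) := by
  cases p with
  | nil => simp [occ_nil_left]
  | cons x p => rw [occ_cons_cons]; exact Nat.le_add_right _ _

lemma occ_replicate (x : Bool) (w : List Bool) (m : ℕ) :
    occ (List.replicate m x) w = (w.count x).choose m := by
  induction w generalizing m with
  | nil =>
    cases m with
    | zero => simp [occ_nil_left]
    | succ m => rw [List.replicate_succ, occ_cons_nil]; simp
  | cons a w ih =>
    cases m with
    | zero => simp [occ_nil_left]
    | succ m =>
      rw [List.replicate_succ, occ_cons_cons, ← List.replicate_succ, ih, ih,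
        List.count_cons]
      by_cases h : x = a
      · subst h
        simp [Nat.choose_succ_succ, Nat.add_comm]
      · have : (a == x) = false := by simp [Ne.symm h]
        simp [this, h]

lemma occ_append_le (q1 q2 w : List Bool) : occ (q1 ++ q2) w ≤ occ q1 w * occ q2 w := by
  induction w generalizing q1 with
  | nil =>
    cases q1 with
    | nil => simp [occ_nil_left]
    | cons a q1 => rw [List.cons_append, occ_cons_nil, occ_cons_nil]; simp
  | cons c v ih =>
    cases q1 with
    | nil => simp [occ_nil_left]
    | cons a q1 =>
      rw [List.cons_append, occ_cons_cons, occ_cons_cons]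
      have h1 : occ (q1 ++ q2) v ≤ occ q1 v * occ q2 v := ih q1
      have h2 : occ (a :: q1 ++ q2) v ≤ occ (a :: q1) v * occ q2 v := ih (a :: q1)
      have h3 : occ q2 v ≤ occ q2 (c :: v) := occ_le_cons _ _ _
      by_cases h : a = c
      · rw [if_pos h, if_pos h]
        calc occ (a :: (q1 ++ q2)) v + occ (q1 ++ q2) v
            ≤ occ (a :: q1) v * occ q2 v + occ q1 v * occ q2 v := by
              exact Nat.add_le_add h2 h1
          _ = (occ (a :: q1) v + occ q1 v) * occ q2 v := by ring
          _ ≤ (occ (a :: q1) v + occ q1 v) * occ q2 (c :: v) :=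
              Nat.mul_le_mul_left _ h3
      · rw [if_neg h, if_neg h]
        calc occ (a :: (q1 ++ q2)) v + 0 ≤ occ (a :: q1) v * occ q2 v + 0 := by
              exact Nat.add_le_add h2 (le_refl 0)
          _ ≤ (occ (a :: q1) v + 0) * occ q2 (c :: v) := by
              simp only [Nat.add_zero]
              exact Nat.mul_le_mul_left _ h3

lemma occ_append_ge (q1 q2 w1 w2 : List Bool) :
    occ q1 w1 * occ q2 w2 ≤ occ (q1 ++ q2) (w1 ++ w2) := by
  induction w1 generalizing q1 with
  | nil =>
    cases q1 with
    | nil => simp [occ_nil_left]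
    | cons a q1 => rw [occ_cons_nil]; simp
  | cons c v ih =>
    cases q1 with
    | nil =>
      rw [occ_nil_left, List.nil_append, List.cons_append, one_mul]
      calc occ q2 w2 ≤ occ ([] ++ q2) (v ++ w2) := by
            simpa [occ_nil_left] using ih []
        _ ≤ occ q2 (c :: (v ++ w2)) := by
            rw [List.nil_append]; exact occ_le_cons _ _ _
    | cons a q1 =>
      rw [List.cons_append, List.cons_append, occ_cons_cons, occ_cons_cons]
      by_cases h : a = c
      · rw [if_pos h, if_pos h]
        calc (occ (a :: q1) v + occ q1 v) * occ q2 w2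
            = occ (a :: q1) v * occ q2 w2 + occ q1 v * occ q2 w2 := by ring
          _ ≤ occ (a :: q1 ++ q2) (v ++ w2) + occ (q1 ++ q2) (v ++ w2) :=
              Nat.add_le_add (ih (a :: q1)) (ih q1)
      · rw [if_neg h, if_neg h]
        simpa using ih (a :: q1)

lemma occ_split (x : Bool) (Q : List Bool) (w P : List Bool) :
    occ (P ++ x :: Q) w =
      ∑ m ∈ Finset.range w.length,
        (if w.getD m (!x) = x then occ P (w.take m) * occ Q (w.drop (m + 1)) else 0) := by
  induction w generalizing P with
  | nil =>
    cases P with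
    | nil => simp [occ_cons_nil]
    | cons a P => rw [List.cons_append, occ_cons_nil]; simp
  | cons y w ih =>
    rw [List.length_cons, Finset.sum_range_succ']
    have hgd : ∀ m : ℕ, (y :: w).getD (m + 1) (!x) = w.getD m (!x) := by
      intro m; simp
    have htk : ∀ m : ℕ, (y :: w).take (m + 1) = y :: w.take m := by
      intro m; simp
    have hdr : ∀ m : ℕ, (y :: w).drop (m + 1 + 1) = w.drop (m + 1) := by
      intro m; simp
    cases P with
    | nil =>
      have ih0 := ih []
      rw [List.nil_append] at ih0
      rw [List.nil_append, occ_cons_cons, ih0]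
      simp only [hgd, htk, hdr, occ_nil_left, one_mul, List.getD_cons_zero,
        List.take_zero, List.drop_one, List.drop_succ_cons, List.drop_zero]
      by_cases h : x = y
      · simp only [if_pos h, if_pos h.symm]
        try ring
      · simp only [if_neg h, if_neg (Ne.symm h)]
        try simp
    | cons a P =>
      have iha := ih (a :: P)
      rw [List.cons_append] at iha
      rw [List.cons_append, occ_cons_cons, iha, ih P]
      simp only [hgd, htk, hdr, List.getD_cons_zero, List.take_zero,
        List.drop_succ_cons, List.drop_zero]
      have hocc : ∀ m : ℕ, occ (a :: P) (y :: w.take m)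
          = occ (a :: P) (w.take m) + if a = y then occ P (w.take m) else 0 :=
        fun m => occ_cons_cons a P y (w.take m)
      have hz : (if y = x then occ (a :: P) [] * occ Q w else 0) = 0 := by
        rw [occ_cons_nil]; simp
      rw [hz, add_zero]
      by_cases h : a = y
      · rw [if_pos h]
        rw [← Finset.sum_add_distrib]
        congr 1
        funext m
        by_cases hm : w.getD m (!x) = x
        · rw [if_pos hm, if_pos hm, if_pos hm, hocc m, if_pos h]
          ring
        · rw [if_neg hm, if_neg hm, if_neg hm]
      · rw [if_neg h, add_zero]
        congr 1
        funext m
        by_cases hm : w.getD m (!x) = x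
        · rw [if_pos hm, if_pos hm, hocc m, if_neg h, add_zero]
        · rw [if_neg hm, if_neg hm]

lemma hockey (w : List Bool) (r : ℕ) :
    (∑ m ∈ Finset.range w.length,
        (if w.getD m true = false then ((w.drop (m + 1)).count false).choose r else 0))
      = (w.count false).choose (r + 1) := by
  induction w with
  | nil => simp
  | cons y w ih =>
    rw [List.length_cons, Finset.sum_range_succ']
    simp only [List.getD_cons_succ, List.drop_succ_cons, List.getD_cons_zero,
      List.drop_zero, ih, List.count_cons]
    cases y with
    | false => simp [Nat.choose_succ_succ, Nat.add_comm]
    | true => simp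

lemma count_true_add_count_false (w : List Bool) : w.count true + w.count false = w.length := by
  induction w with
  | nil => simp
  | cons y w ih => cases y <;> simp [List.count_cons] <;> omega

lemma occ_oneZeroOne_ge (i j k a b c : ℕ) :
    a.choose i * b.choose j * c.choose k ≤ occ (oneZeroOne i j k) (oneZeroOne a b c) := by
  unfold oneZeroOne
  rw [List.append_assoc, List.append_assoc]
  calc a.choose i * b.choose j * c.choose k
      = (List.count true (List.replicate a true)).choose i *
        ((List.count false (List.replicate b false)).choose j *
          (List.count true (List.replicate c true)).choose k) := by
        simp [List.count_replicate_self]; ring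
    _ = occ (List.replicate i true) (List.replicate a true) *
        (occ (List.replicate j false) (List.replicate b false) *
          occ (List.replicate k true) (List.replicate c true)) := by
        rw [occ_replicate, occ_replicate, occ_replicate]
    _ ≤ occ (List.replicate i true) (List.replicate a true) *
        occ (List.replicate j false ++ List.replicate k true)
          (List.replicate b false ++ List.replicate c true) :=
        Nat.mul_le_mul_left _ (occ_append_ge _ _ _ _)
    _ ≤ _ := occ_append_ge _ _ _ _

lemma occ_upper (i j' k : ℕ) (w : List Bool) :
    ∃ a b c : ℕ, a + b + c = w.length ∧
      occ (oneZeroOne i (j' + 1) k) w ≤ a.choose i * b.choose (j' + 1) * c.choose k := by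
  set T := w.count true with hT
  set F := w.count false with hF
  set Q := List.replicate j' false ++ List.replicate k true with hQ
  have hp : oneZeroOne i (j' + 1) k = List.replicate i true ++ false :: Q := by
    simp [oneZeroOne, hQ, List.replicate_succ, List.append_assoc]
  set f : ℕ → ℕ := fun u => u.choose i * (T - u).choose k with hf
  obtain ⟨u0, hu0mem, hu0⟩ :=
    Finset.exists_mem_eq_sup (Finset.range (T + 1)) ⟨0, by simp⟩ f
  set M := (Finset.range (T + 1)).sup f with hM
  refine ⟨u0, F, T - u0, ?_, ?_⟩
  · have : u0 ≤ T := by simpa [Nat.lt_succ_iff] using hu0mem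
    have := count_true_add_count_false w
    omega
  · rw [hp, occ_split]
    have hterm : ∀ m ∈ Finset.range w.length,
        (if w.getD m (!false) = false then occ (List.replicate i true) (w.take m) * occ Q (w.drop (m + 1)) else 0)
          ≤ (if w.getD m (!false) = false then M * ((w.drop (m + 1)).count false).choose j' else 0) := by
      intro m _
      by_cases hc : w.getD m (!false) = false
      · rw [if_pos hc, if_pos hc]
        set v := w.drop (m + 1) with hv
        set t1 := (w.take m).count true with ht1
        set t2 := v.count true with ht2
        have h1 : occ (List.replicate i true) (w.take m) = t1.choose i := occ_replicate _ _ _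
        have h2 : occ Q v ≤ (v.count false).choose j' * t2.choose k := by
          calc occ Q v ≤ occ (List.replicate j' false) v * occ (List.replicate k true) v :=
                occ_append_le _ _ _
            _ = (v.count false).choose j' * t2.choose k := by
                rw [occ_replicate, occ_replicate]
        have ht1T : t1 ≤ T := (w.take_sublist m).count_le true
        have hsum : t1 + t2 ≤ T := by
          have hdec : t2 ≤ (w.drop m).count true := by
            have : v.Sublist (w.drop m) := by
              have : v = List.drop 1 (w.drop m) := by
                rw [hv, List.drop_drop]
              rw [this]
              exact List.drop_sublist _ _
            exact this.count_le true
          have hsplit : t1 + (w.drop m).count true = T := by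
            rw [ht1, hT, ← List.count_append, List.take_append_drop]
          omega
        calc occ (List.replicate i true) (w.take m) * occ Q v
            ≤ t1.choose i * ((v.count false).choose j' * t2.choose k) := by
              rw [h1]; exact Nat.mul_le_mul_left _ h2
          _ = (t1.choose i * t2.choose k) * (v.count false).choose j' := by ring
          _ ≤ M * (v.count false).choose j' := by
              refine Nat.mul_le_mul_right _ ?_
              calc t1.choose i * t2.choose k ≤ t1.choose i * (T - t1).choose k :=
                    Nat.mul_le_mul_left _ (Nat.choose_le_choose k (by omega))
                _ = f t1 := rfl
                _ ≤ M := Finset.le_sup (by simp [Nat.lt_succ_iff, ht1T])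
      · rw [if_neg hc, if_neg hc]
    calc (∑ m ∈ Finset.range w.length,
          if w.getD m (!false) = false then
            occ (List.replicate i true) (w.take m) * occ Q (w.drop (m + 1)) else 0)
        ≤ ∑ m ∈ Finset.range w.length,
            (if w.getD m (!false) = false then M * ((w.drop (m + 1)).count false).choose j' else 0) :=
          Finset.sum_le_sum hterm
      _ = M * ∑ m ∈ Finset.range w.length,
            (if w.getD m (!false) = false then ((w.drop (m + 1)).count false).choose j' else 0) := by
          rw [Finset.mul_sum]
          congr 1
          funext m
          by_cases hc : w.getD m (!false) = false
          · rw [if_pos hc, if_pos hc]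
          · rw [if_neg hc, if_neg hc, Nat.mul_zero]
      _ = M * F.choose (j' + 1) := by
          have := hockey w j'
          simp only [Bool.not_false] at *
          rw [this]
      _ = u0.choose i * F.choose (j' + 1) * (T - u0).choose k := by
          have hMe : M = u0.choose i * (T - u0).choose k := hu0
          rw [hMe]; ring

theorem maxOcc_oneZeroOne (i j k : ℕ) (hj : 1 ≤ j) (n : ℕ) (hn : i + j + k ≤ n) :
    maxOcc n (oneZeroOne i j k)
      = sSup {m | ∃ a b c : ℕ, a + b + c = n ∧
          m = a.choose i * b.choose j * c.choose k} := by
  obtain ⟨j', rfl⟩ : ∃ j'', j = j'' + 1 := ⟨j - 1, (Nat.succ_pred_eq_of_pos hj).symm⟩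
  set p := oneZeroOne i (j' + 1) k with hp
  set L := {m | ∃ w : List Bool, w.length = n ∧ occ p w = m} with hL
  set R := {m | ∃ a b c : ℕ, a + b + c = n ∧ m = a.choose i * b.choose (j' + 1) * c.choose k}
    with hR
  have hLne : L.Nonempty := ⟨occ p (List.replicate n true), List.replicate n true, by simp, rfl⟩
  have hRne : R.Nonempty := ⟨n.choose i * (0 : ℕ).choose (j' + 1) * (0 : ℕ).choose k,
    n, 0, 0, by omega, rfl⟩
  have hLbdd : BddAbove L := by
    refine ⟨2 ^ n, ?_⟩
    rintro m ⟨w, hw, rfl⟩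
    calc occ p w ≤ w.sublists.length := List.count_le_length
      _ = 2 ^ n := by rw [List.length_sublists, hw]
  have hRbdd : BddAbove R := by
    refine ⟨n.choose i * n.choose (j' + 1) * n.choose k, ?_⟩
    rintro m ⟨a, b, c, habc, rfl⟩
    exact Nat.mul_le_mul (Nat.mul_le_mul (Nat.choose_le_choose i (by omega))
      (Nat.choose_le_choose _ (by omega))) (Nat.choose_le_choose k (by omega))
  rw [maxOcc]
  apply le_antisymm
  · refine csSup_le hLne ?_
    rintro m ⟨w, hw, rfl⟩
    obtain ⟨a, b, c, habc, hle⟩ := occ_upper i j' k w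
    rw [hw] at habc
    exact le_trans hle (le_csSup hRbdd ⟨a, b, c, habc, rfl⟩)
  · refine csSup_le hRne ?_
    rintro m ⟨a, b, c, habc, rfl⟩
    refine le_trans (occ_oneZeroOne_ge i (j' + 1) k a b c) (le_csSup hLbdd ?_)
    exact ⟨oneZeroOne a b c, by simp [oneZeroOne]; omega, rfl⟩
end

section
/- Let p be a binary word with exactly 2 runs. Then every p-optimal binary word (of any length n for which M_{n,p} ≥ 1) also has exactly 2 runs. -/
def myocc : List Bool → List Bool → ℕ
  | [], _ => 1
  | _ :: _, [] => 0
  | a :: p, b :: w => (if a = b then myocc p w else 0) + myocc (a :: p) w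

lemma myocc_nil (w : List Bool) : myocc [] w = 1 := by cases w <;> rfl

lemma myocc_cons_nil (a : Bool) (p : List Bool) : myocc (a::p) [] = 0 := rfl

lemma myocc_cons_cons (a b : Bool) (p w : List Bool) :
    myocc (a::p) (b::w) = (if a = b then myocc p w else 0) + myocc (a::p) w := rfl



lemma flatMap_count (a : Bool) (p : List Bool) (L : List (List Bool)) :
    (L.flatMap fun x => [x, a::x]).count p
      = L.count p + (match p with | [] => 0 | b::p' => if b = a then L.count p' else 0) := by
  induction L with
  | nil => cases p <;> simp
  | cons x L ih =>
      rw [List.flatMap_cons, List.count_append, ih]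
      rcases p with _ | ⟨b, p'⟩
      · simp [List.count_cons]; omega
      · by_cases hb : b = a
        · subst hb
          by_cases hx : x = p'
          · subst hx
            by_cases h2 : b::x = x <;> simp_all [List.count_cons] <;> omega
          · by_cases h2 : x = b :: p' <;> simp_all [List.count_cons] <;> omega
        · have h3 : ¬ (a::x = b::p') := by intro h; injection h with h1 h2; exact hb h1.symm
          by_cases hx : x = b :: p' <;> simp_all [List.count_cons] <;>
            first | omega | exact (by assumption : a = b).symm

lemma occ_cons (p : List Bool) (a : Bool) (w : List Bool) :
    occ p (a::w) = occ p w + (match p with | [] => 0 | b::p' => if b = a then occ p' w else 0) := by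
  rw [occ, List.sublists_cons]
  exact flatMap_count a p w.sublists

lemma occ_eq_myocc (p w : List Bool) : occ p w = myocc p w := by
  induction w generalizing p with
  | nil =>
      rcases p with _ | ⟨b, p'⟩
      · simp [occ, myocc_nil]
      · simp [occ, myocc_cons_nil]
  | cons a w ih =>
      rw [occ_cons]
      rcases p with _ | ⟨b, p'⟩
      · simp [ih, myocc_nil]
      · rw [myocc_cons_cons, ih]
        by_cases h : b = a <;> simp [h, ih] <;> omega


lemma count_cons' (x c : Bool) (w : List Bool) :
    (c::w).count x = w.count x + if c = x then 1 else 0 := by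
  rw [List.count_cons]; by_cases h : c = x <;> simp [h]

lemma myocc_replicate (x : Bool) : ∀ (w : List Bool) (n : ℕ),
    myocc (List.replicate n x) w = (w.count x).choose n := by
  intro w
  induction w with
  | nil =>
      intro n
      cases n with
      | zero => simp [myocc_nil]
      | succ n => simp [List.replicate_succ, myocc_cons_nil, Nat.choose_eq_zero_of_lt]
  | cons c w ih =>
      intro n
      cases n with
      | zero => simp [myocc_nil]
      | succ n =>
          rw [List.replicate_succ, myocc_cons_cons, ← List.replicate_succ]
          rw [count_cons', ih, ih]
          by_cases h : c = x
          · subst h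
            simp [Nat.choose_succ_succ]
          · have h' : ¬ x = c := fun hh => h hh.symm
            simp [h, h']

lemma bool_ne_iff (c x : Bool) : c ≠ x ↔ c = !x := by cases c <;> cases x <;> simp

lemma myocc_le (x : Bool) : ∀ (w : List Bool) (a b : ℕ),
    myocc (List.replicate a x ++ List.replicate b (!x)) w
      ≤ (w.count x).choose a * (w.count (!x)).choose b := by
  intro w
  induction w with
  | nil =>
      intro a b
      cases a with
      | zero =>
          simp only [List.replicate_zero, List.nil_append]
          rw [myocc_replicate]
          simp
      | succ a =>
          rw [List.replicate_succ, List.cons_append, myocc_cons_nil]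
          exact Nat.zero_le _
  | cons c w ih =>
      intro a b
      cases a with
      | zero =>
          simp only [List.replicate_zero, List.nil_append]
          rw [myocc_replicate]
          simp
      | succ a =>
          rw [List.replicate_succ, List.cons_append, myocc_cons_cons, ← List.cons_append,
            ← List.replicate_succ]
          by_cases h : c = x
          · subst h
            have h2 := ih a b
            have h3 := ih (a+1) b
            rw [count_cons' c, count_cons' (!c)]
            have hne : ¬ c = !c := by simp
            simp only [if_pos rfl, if_neg hne, Nat.add_zero]
            calc myocc (List.replicate a c ++ List.replicate b (!c)) w
                  + myocc (List.replicate (a+1) c ++ List.replicate b (!c)) w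
                ≤ (w.count c).choose a * (w.count (!c)).choose b
                  + (w.count c).choose (a+1) * (w.count (!c)).choose b := Nat.add_le_add h2 h3
              _ = (w.count c + 1).choose (a+1) * (w.count (!c)).choose b := by
                  rw [Nat.choose_succ_succ]; ring
          · have hx : ¬ (x = c) := fun hh => h hh.symm
            rw [if_neg hx, Nat.zero_add]
            have hc : c = !x := (bool_ne_iff c x).mp h
            rw [count_cons', count_cons', if_neg h, if_pos hc]
            calc myocc (List.replicate (a+1) x ++ List.replicate b (!x)) w
                ≤ (w.count x).choose (a+1) * (w.count (!x)).choose b := ih (a+1) b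
              _ ≤ (w.count x + 0).choose (a+1) * (w.count (!x) + 1).choose b :=
                  Nat.mul_le_mul_left _ (Nat.choose_le_choose b (Nat.le_succ _))

lemma myocc_lt (x : Bool) : ∀ (w : List Bool) (a b : ℕ), 1 ≤ a → 1 ≤ b →
    a ≤ w.count x → b ≤ w.count (!x) →
    (∃ u v, w = u ++ (!x) :: v ∧ x ∈ v) →
    myocc (List.replicate a x ++ List.replicate b (!x)) w
      < (w.count x).choose a * (w.count (!x)).choose b := by
  intro w
  induction w with
  | nil =>
      intro a b ha hb haz hbo hd
      simp at haz
      omega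
  | cons c w ih =>
      intro a b ha hb haz hbo hd
      obtain ⟨u, v, huv, hxv⟩ := hd
      obtain ⟨a', rfl⟩ : ∃ a', a = a' + 1 := ⟨a - 1, by omega⟩
      have hxw : x ∈ w := by
        rcases u with _ | ⟨c', u'⟩
        · injection huv with h1 h2; subst h2; exact hxv
        · injection huv with h1 h2; subst h2
          exact List.mem_append.mpr (Or.inr (List.mem_cons_of_mem _ hxv))
      by_cases hc : c = x
      · subst hc
        -- u must be nonempty
        rcases u with _ | ⟨c', u'⟩
        · injection huv with h1 h2
          exact absurd h1 (by simp)
        · injection huv with h1 h2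
          have hdesc : ∃ u v, w = u ++ (!c) :: v ∧ c ∈ v := ⟨u', v, h2, hxv⟩
          have hz1 : 1 ≤ w.count c := List.count_pos_iff.mpr hxw
          have hcz : (c::w).count c = w.count c + 1 := by rw [count_cons']; simp
          have hco : (c::w).count (!c) = w.count (!c) := by
            rw [count_cons']; simp
          rw [hcz] at haz
          rw [hco] at hbo
          rw [List.replicate_succ, List.cons_append, myocc_cons_cons, ← List.cons_append,
            ← List.replicate_succ, if_pos rfl, hcz, hco]
          by_cases hle : a' + 1 ≤ w.count c
          · have h1 : myocc (List.replicate a' c ++ List.replicate b (!c)) w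
                ≤ (w.count c).choose a' * (w.count (!c)).choose b := myocc_le c w a' b
            have h2 := ih (a' + 1) b (by omega) hb hle hbo hdesc
            calc _ < (w.count c).choose a' * (w.count (!c)).choose b
                  + (w.count c).choose (a'+1) * (w.count (!c)).choose b :=
                    Nat.add_lt_add_of_le_of_lt h1 h2
              _ = (w.count c + 1).choose (a'+1) * (w.count (!c)).choose b := by
                  rw [Nat.choose_succ_succ]; ring
          · have hza : w.count c = a' := by omega
            have h1 := ih a' b (by omega) hb (by omega) hbo hdesc
            have h2 : myocc (List.replicate (a'+1) c ++ List.replicate b (!c)) w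
                ≤ (w.count c).choose (a'+1) * (w.count (!c)).choose b := myocc_le c w (a'+1) b
            calc _ < (w.count c).choose a' * (w.count (!c)).choose b
                  + (w.count c).choose (a'+1) * (w.count (!c)).choose b :=
                    Nat.add_lt_add_of_lt_of_le h1 h2
              _ = (w.count c + 1).choose (a'+1) * (w.count (!c)).choose b := by
                  rw [Nat.choose_succ_succ]; ring
      · have hcx : c = !x := (bool_ne_iff c x).mp hc
        have hcz : (c::w).count x = w.count x := by rw [count_cons']; simp [hc]
        have hco : (c::w).count (!x) = w.count (!x) + 1 := by rw [count_cons', if_pos hcx]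
        rw [hcz] at haz
        rw [hco] at hbo
        rw [List.replicate_succ, List.cons_append, myocc_cons_cons, ← List.cons_append,
          ← List.replicate_succ, if_neg (fun hh => hc hh.symm), Nat.zero_add, hcz, hco]
        have hbound : myocc (List.replicate (a'+1) x ++ List.replicate b (!x)) w
            ≤ (w.count x).choose (a'+1) * (w.count (!x)).choose b := myocc_le x w (a'+1) b
        rcases u with _ | ⟨c', u'⟩
        · -- descent starts at c : the x in v=w comes after
          obtain ⟨b', rfl⟩ : ∃ b', b = b' + 1 := ⟨b - 1, by omega⟩
          have hchoose : (w.count (!x)).choose (b'+1) < (w.count (!x) + 1).choose (b'+1) := by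
            have h1 := Nat.choose_succ_succ (w.count (!x)) b'
            have h2 : 0 < (w.count (!x)).choose b' := Nat.choose_pos (by omega)
            simp only [Nat.succ_eq_add_one] at h1
            omega
          have hzpos : 0 < (w.count x).choose (a'+1) := Nat.choose_pos haz
          calc _ ≤ (w.count x).choose (a'+1) * (w.count (!x)).choose (b'+1) := hbound
            _ < (w.count x).choose (a'+1) * (w.count (!x) + 1).choose (b'+1) :=
                mul_lt_mul_of_pos_left hchoose hzpos
        · injection huv with h1 h2
          have hdesc : ∃ u v, w = u ++ (!x) :: v ∧ x ∈ v := ⟨u', v, h2, hxv⟩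
          by_cases hble : b ≤ w.count (!x)
          · have h1 := ih (a'+1) b ha hb haz hble hdesc
            calc _ < (w.count x).choose (a'+1) * (w.count (!x)).choose b := h1
              _ ≤ (w.count x).choose (a'+1) * (w.count (!x) + 1).choose b :=
                  Nat.mul_le_mul_left _ (Nat.choose_le_choose b (Nat.le_succ _))
          · have h0 : (w.count (!x)).choose b = 0 := Nat.choose_eq_zero_of_lt (by omega)
            have : myocc (List.replicate (a'+1) x ++ List.replicate b (!x)) w = 0 := by
              rw [h0, Nat.mul_zero] at hbound
              omega
            rw [this]
            exact Nat.mul_pos (Nat.choose_pos haz) (Nat.choose_pos hbo)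

lemma count_sorted (x : Bool) (Z O : ℕ) :
    (List.replicate Z x ++ List.replicate O (!x)).count x = Z ∧
    (List.replicate Z x ++ List.replicate O (!x)).count (!x) = O := by
  constructor <;> simp [List.count_append, List.count_replicate]

lemma myocc_sorted (x : Bool) (b : ℕ) : ∀ (Z : ℕ) (a O : ℕ),
    myocc (List.replicate a x ++ List.replicate b (!x))
        (List.replicate Z x ++ List.replicate O (!x)) = Z.choose a * O.choose b := by
  intro Z
  induction Z with
  | zero =>
      intro a O
      cases a with
      | zero =>
          simp only [List.replicate_zero, List.nil_append]
          rw [myocc_replicate]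
          simp [List.count_replicate]
      | succ a =>
          have h := myocc_le x (List.replicate 0 x ++ List.replicate O (!x)) (a+1) b
          rw [(count_sorted x 0 O).1, (count_sorted x 0 O).2] at h
          rw [Nat.choose_eq_zero_of_lt (by omega : (0:ℕ) < a + 1)] at h ⊢
          simp at h ⊢
          omega
  | succ Z ih =>
      intro a O
      cases a with
      | zero =>
          simp only [List.replicate_zero, List.nil_append]
          rw [myocc_replicate, (count_sorted x (Z+1) O).2]
          simp
      | succ a =>
          rw [List.replicate_succ, List.cons_append]
          rw [List.replicate_succ, List.cons_append]
          rw [myocc_cons_cons, if_pos rfl, ih a O, ← List.cons_append, ← List.replicate_succ,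
            ih (a+1) O, Nat.choose_succ_succ]
          ring

lemma sorted_or_descent (x : Bool) : ∀ w : List Bool,
    (∃ u v, w = u ++ (!x) :: v ∧ x ∈ v) ∨
    w = List.replicate (w.count x) x ++ List.replicate (w.count (!x)) (!x) := by
  intro w
  induction w with
  | nil => right; simp
  | cons c w ih =>
      rcases ih with ⟨u, v, hw, hx⟩ | hs
      · exact Or.inl ⟨c::u, v, by rw [hw]; rfl, hx⟩
      · by_cases hc : c = x
        · subst hc
          right
          have h1 : (c::w).count c = w.count c + 1 := by rw [count_cons']; simp
          have h2 : (c::w).count (!c) = w.count (!c) := by rw [count_cons']; simp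
          rw [h1, h2, List.replicate_succ, List.cons_append]
          exact congrArg (c :: ·) hs
        · have hcx : c = !x := (bool_ne_iff c x).mp hc
          by_cases hz : w.count x = 0
          · right
            have h1 : (c::w).count x = 0 := by rw [count_cons', if_neg hc, hz]
            have h2 : (c::w).count (!x) = w.count (!x) + 1 := by rw [count_cons', if_pos hcx]
            rw [h1, h2, List.replicate_zero, List.nil_append, List.replicate_succ]
            rw [hz, List.replicate_zero, List.nil_append] at hs
            rw [hcx]
            nth_rewrite 1 [hs]
            simp [List.count_replicate]
          · left
            refine ⟨[], w, by rw [hcx]; rfl, ?_⟩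
            exact List.count_pos_iff.mp (by omega)


lemma loop_cons {α : Type*} (R : α → α → Bool) (b : α) (t : List α) (a : α) (g : List α)
    (gs : List (List α)) :
    List.splitBy.loop R (b::t) a g gs =
      if R a b then List.splitBy.loop R t b (a::g) gs
      else List.splitBy.loop R t b [] ((a::g).reverse :: gs) := by
  rw [List.splitBy.loop]
  cases R a b <;> simp

lemma loop_nil {α : Type*} (R : α → α → Bool) (a : α) (g : List α) (gs : List (List α)) :
    List.splitBy.loop R [] a g gs = ((a::g).reverse :: gs).reverse := rfl

lemma loop_acc {α : Type*} (R : α → α → Bool) : ∀ (t : List α) (a : α) (g : List α)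
    (gs : List (List α)),
    List.splitBy.loop R t a g gs = gs.reverse ++ List.splitBy.loop R t a g [] := by
  intro t
  induction t with
  | nil => intro a g gs; rw [loop_nil, loop_nil]; simp
  | cons b t ih =>
      intro a g gs
      rw [loop_cons, loop_cons]
      by_cases h : R a b
      · rw [if_pos h, if_pos h]
        exact ih b (a::g) gs
      · rw [if_neg h, if_neg h, ih b [] ((a::g).reverse :: gs), ih b [] [(a :: g).reverse]]
        simp

lemma splitBy_run (x : Bool) (rest : List Bool) (h : ∀ y t, rest = y :: t → y ≠ x) :
    ∀ (a : ℕ) (g : List Bool) (gs : List (List Bool)),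
    List.splitBy.loop (· == ·) (List.replicate a x ++ rest) x g gs =
      gs.reverse ++ (((x::g).reverse ++ List.replicate a x) :: rest.splitBy (· == ·)) := by
  intro a
  induction a with
  | zero =>
      intro g gs
      simp only [List.replicate_zero, List.nil_append]
      cases rest with
      | nil => rw [loop_nil]; simp [List.splitBy_nil]
      | cons y t =>
          have hy : (x == y) = false := beq_eq_false_iff_ne.mpr (Ne.symm (h y t rfl))
          rw [loop_cons, hy]
          simp only [Bool.false_eq_true, if_false]
          rw [loop_acc]
          have : (y :: t).splitBy (· == ·) = List.splitBy.loop (· == ·) t y [] [] := rfl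
          rw [this]
          simp
  | succ a ih =>
      intro g gs
      rw [List.replicate_succ, List.cons_append, loop_cons, if_pos (by simp)]
      rw [ih (x::g) gs]
      simp [List.replicate_succ]

lemma splitBy_replicate_append (x : Bool) (a : ℕ) (ha : 1 ≤ a) (rest : List Bool)
    (h : ∀ y t, rest = y :: t → y ≠ x) :
    (List.replicate a x ++ rest).splitBy (· == ·)
      = List.replicate a x :: rest.splitBy (· == ·) := by
  obtain ⟨a', rfl⟩ : ∃ a', a = a' + 1 := ⟨a - 1, by omega⟩
  rw [List.replicate_succ, List.cons_append]
  show List.splitBy.loop (· == ·) (List.replicate a' x ++ rest) x [] [] = _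
  rw [splitBy_run x rest h a' [] []]
  simp [List.replicate_succ]

lemma numRuns_replicate_append (x : Bool) (a : ℕ) (ha : 1 ≤ a) (rest : List Bool)
    (h : ∀ y t, rest = y :: t → y ≠ x) :
    numRuns (List.replicate a x ++ rest) = 1 + numRuns rest := by
  unfold numRuns runs
  rw [splitBy_replicate_append x a ha rest h]
  simp [Nat.add_comm]

lemma numRuns_nil : numRuns [] = 0 := rfl

lemma loop_len_pos (R : Bool → Bool → Bool) : ∀ (t : List Bool) (a : Bool) (g : List Bool)
    (gs : List (List Bool)), 1 ≤ (List.splitBy.loop R t a g gs).length := by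
  intro t
  induction t with
  | nil => intro a g gs; rw [loop_nil]; simp
  | cons b t ih =>
      intro a g gs
      rw [loop_cons]
      by_cases h : R a b
      · rw [if_pos h]; exact ih b (a::g) gs
      · rw [if_neg h]; exact ih b [] _

lemma numRuns_pos (c : Bool) (w : List Bool) : 1 ≤ numRuns (c :: w) := by
  unfold numRuns runs
  show 1 ≤ (List.splitBy.loop (· == ·) w c [] []).length
  exact loop_len_pos _ w c [] []

lemma canon (w : List Bool) (hw : w ≠ []) :
    ∃ x a rest, 1 ≤ a ∧ w = List.replicate a x ++ rest ∧
      (∀ y t, rest = y :: t → y ≠ x) := by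
  induction w with
  | nil => exact absurd rfl hw
  | cons c w ih =>
      cases w with
      | nil => exact ⟨c, 1, [], le_refl 1, by simp, fun y t h => by simp at h⟩
      | cons d w' =>
          by_cases hdc : d = c
          · subst hdc
            obtain ⟨x, a, rest, ha, heq, hhead⟩ := ih (by simp)
            have hx : x = d := by
              obtain ⟨a', rfl⟩ : ∃ a', a = a' + 1 := ⟨a - 1, by omega⟩
              rw [List.replicate_succ, List.cons_append] at heq
              injection heq with h1 h2
              exact h1.symm
            subst hx
            refine ⟨x, a + 1, rest, by omega, ?_, hhead⟩
            rw [List.replicate_succ, List.cons_append, ← heq]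
          · exact ⟨c, 1, d :: w', le_refl 1, by simp, fun y t h => by
              injection h with h1 h2; subst h1; exact hdc⟩



lemma two_runs_decomp (p : List Bool) (hp : numRuns p = 2) :
    ∃ x a b, 1 ≤ a ∧ 1 ≤ b ∧ p = List.replicate a x ++ List.replicate b (!x) := by
  have hpne : p ≠ [] := by rintro rfl; rw [numRuns_nil] at hp; omega
  obtain ⟨x, a, r1, ha, heq, hh⟩ := canon p hpne
  have h1 : numRuns p = 1 + numRuns r1 := by rw [heq]; exact numRuns_replicate_append x a ha r1 hh
  have hr1 : numRuns r1 = 1 := by omega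
  have hr1ne : r1 ≠ [] := by rintro rfl; rw [numRuns_nil] at hr1; omega
  obtain ⟨x2, a2, r2, ha2, heq2, hh2⟩ := canon r1 hr1ne
  have h2 : numRuns r1 = 1 + numRuns r2 := by
    rw [heq2]; exact numRuns_replicate_append x2 a2 ha2 r2 hh2
  have hr2 : numRuns r2 = 0 := by omega
  have hr2nil : r2 = [] := by
    cases r2 with
    | nil => rfl
    | cons c t => have := numRuns_pos c t; omega
  subst hr2nil
  have hx2 : x2 ≠ x := by
    obtain ⟨a2', rfl⟩ : ∃ a2', a2 = a2' + 1 := ⟨a2 - 1, by omega⟩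
    rw [List.replicate_succ, List.cons_append] at heq2
    exact hh x2 _ heq2
  have hx2' : x2 = !x := (bool_ne_iff x2 x).mp hx2
  refine ⟨x, a, a2, ha, ha2, ?_⟩
  rw [heq, heq2, hx2']
  simp

lemma numRuns_sorted (x : Bool) (Z O : ℕ) (hZ : 1 ≤ Z) (hO : 1 ≤ O) :
    numRuns (List.replicate Z x ++ List.replicate O (!x)) = 2 := by
  have h1 : numRuns (List.replicate Z x ++ List.replicate O (!x))
      = 1 + numRuns (List.replicate O (!x)) := by
    refine numRuns_replicate_append x Z hZ _ ?_
    intro y t ht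
    obtain ⟨O', rfl⟩ : ∃ O', O = O' + 1 := ⟨O - 1, by omega⟩
    rw [List.replicate_succ] at ht
    injection ht with hy _
    subst hy
    simp
  have h2 : numRuns (List.replicate O (!x)) = 1 := by
    have h3 : numRuns (List.replicate O (!x) ++ ([] : List Bool)) = 1 + numRuns ([] : List Bool) :=
      numRuns_replicate_append (!x) O hO [] (fun y t ht => by simp at ht)
    rw [List.append_nil] at h3
    rw [h3, numRuns_nil]
  omega

lemma count_add (x : Bool) (w : List Bool) : w.count x + w.count (!x) = w.length := by
  induction w with
  | nil => simp
  | cons c w ih =>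
      rw [count_cons', count_cons', List.length_cons]
      by_cases h : c = x
      · rw [if_pos h, if_neg (by rw [h]; simp)]; omega
      · rw [if_neg h, if_pos ((bool_ne_iff c x).mp h)]; omega

theorem optimal_of_two_runs_has_two_runs (p : List Bool) (hp : numRuns p = 2)
    (w : List Bool) (hM : 1 ≤ maxOcc w.length p)
    (hw : occ p w = maxOcc w.length p) :
    numRuns w = 2 := by
  obtain ⟨x, a, b, ha, hb, rfl⟩ := two_runs_decomp p hp
  set p := List.replicate a x ++ List.replicate b (!x) with hpdef
  have hbdd : BddAbove {k | ∃ w' : List Bool, w'.length = w.length ∧ occ p w' = k} := by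
    refine ⟨2 ^ w.length, fun k hk => ?_⟩
    obtain ⟨w', hl, ho⟩ := hk
    calc k = occ p w' := ho.symm
      _ ≤ w'.sublists.length := List.count_le_length
      _ = 2 ^ w'.length := List.length_sublists _
      _ = 2 ^ w.length := by rw [hl]
  have hle : ∀ w' : List Bool, w'.length = w.length → occ p w' ≤ maxOcc w.length p :=
    fun w' h => le_csSup hbdd ⟨w', h, rfl⟩
  have h1 : 1 ≤ myocc p w := by rw [← occ_eq_myocc, hw]; exact hM
  have hboundw : myocc p w ≤ (w.count x).choose a * (w.count (!x)).choose b := myocc_le x w a b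
  have hprod : 1 ≤ (w.count x).choose a * (w.count (!x)).choose b := le_trans h1 hboundw
  have hZa : a ≤ w.count x := by
    by_contra h
    have h0 : (w.count x).choose a = 0 := Nat.choose_eq_zero_of_lt (by omega)
    rw [h0, Nat.zero_mul] at hprod
    omega
  have hOb : b ≤ w.count (!x) := by
    by_contra h
    have h0 : (w.count (!x)).choose b = 0 := Nat.choose_eq_zero_of_lt (by omega)
    rw [h0, Nat.mul_zero] at hprod
    omega
  have hlen : (List.replicate (w.count x) x ++ List.replicate (w.count (!x)) (!x)).length
      = w.length := by
    rw [List.length_append, List.length_replicate, List.length_replicate]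
    exact count_add x w
  have hocc' : occ p (List.replicate (w.count x) x ++ List.replicate (w.count (!x)) (!x))
      = (w.count x).choose a * (w.count (!x)).choose b := by
    rw [occ_eq_myocc, hpdef, myocc_sorted]
  rcases sorted_or_descent x w with hdesc | hsorted
  · exfalso
    have hlt : myocc p w < (w.count x).choose a * (w.count (!x)).choose b :=
      myocc_lt x w a b ha hb hZa hOb hdesc
    have : (w.count x).choose a * (w.count (!x)).choose b ≤ occ p w := by
      rw [hw]
      rw [← hocc']
      exact hle _ hlen
    rw [occ_eq_myocc] at this
    omega
  · rw [hsorted]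
    exact numRuns_sorted x _ _ (by omega) (by omega)
end
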